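/- Under the unicycle dynamics ẋ = cos θ, ẏ = sin θ, θ̇ = −k sin θ with k > 0 and θ_0 ∈ (0, π), the heading θ(t) converges to 0 as t → ∞; consequently the trajectory direction (cos θ(t), sin θ(t)) converges to (1, 0). -/

import Mathlib

open Real Filter

/-- Under the unicycle dynamics `ẋ = cos θ, ẏ = sin θ, θ̇ = -k sin θ` with
`k > 0` and `θ(0) = θ₀ ∈ (0, π)`, the heading `θ(t) → 0` as `t → ∞`, and hence the direction
of travel `(cos θ(t), sin θ(t)) → (1, 0)`. -/
theorem heading_converges_to_zero
    (k θ0 : ℝ) (hk : 0 < k) (h1 : 0 < θ0) (h2 : θ0 < Real.pi)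
    (x y θ : ℝ → ℝ)
    (hx : ∀ t, HasDerivAt x (Real.cos (θ t)) t)
    (hy : ∀ t, HasDerivAt y (Real.sin (θ t)) t)
    (hθ : ∀ t, HasDerivAt θ (-k * Real.sin (θ t)) t)
    (h0 : θ 0 = θ0) :
    Tendsto θ atTop (nhds 0)
      ∧ Tendsto (fun t => (Real.cos (θ t), Real.sin (θ t))) atTop
          (nhds ((1 : ℝ), (0 : ℝ))) := by
  set c := Real.tan (θ0 / 2) with hc
  set g : ℝ → ℝ := fun t => 2 * Real.arctan (c * Real.exp (-k * t)) with hg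
  -- derivative of g
  have hsin2 : ∀ u : ℝ, Real.sin (2 * Real.arctan u) = 2 * u / (1 + u ^ 2) := by
    intro u
    rw [Real.sin_two_mul, Real.sin_arctan, Real.cos_arctan]
    have h1 : (0:ℝ) < 1 + u ^ 2 := by positivity
    have hs : Real.sqrt (1 + u ^ 2) ≠ 0 := by positivity
    field_simp
    rw [Real.sq_sqrt h1.le]
  have hg' : ∀ t, HasDerivAt g (-k * Real.sin (g t)) t := by
    intro t
    have he : HasDerivAt (fun t => c * Real.exp (-k * t)) (c * (Real.exp (-k * t) * -k)) t := by
      simpa using ((Real.hasDerivAt_exp _).comp t ((hasDerivAt_id t).const_mul (-k))).const_mul c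
    have ha := (Real.hasDerivAt_arctan (c * Real.exp (-k * t))).comp t he
    have := ha.const_mul 2
    refine this.congr_deriv (Eq.symm ?_)
    simp only [hg]
    rw [hsin2]
    have hne : (1 + (c * Real.exp (-k * t)) ^ 2) ≠ 0 := by positivity
    field_simp
  have hg0 : g 0 = θ0 := by
    simp only [hg, mul_zero, neg_zero, Real.exp_zero, mul_one, hc]
    rw [Real.arctan_tan]
    · ring
    · linarith [Real.pi_pos]
    · linarith
  -- uniqueness
  have heq : ∀ t ≥ 0, θ t = g t := by
    intro t ht
    rcases eq_or_lt_of_le ht with rfl | ht'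
    · rw [h0, hg0]
    have hlip : LipschitzWith ⟨k, hk.le⟩ (fun y => -k * Real.sin y) := by
      apply lipschitzWith_of_nnnorm_deriv_le
      · exact fun y => ((Real.hasDerivAt_sin y).const_mul (-k)).differentiableAt
      · intro y
        have hd : deriv (fun y => -k * Real.sin y) y = -k * Real.cos y :=
          ((Real.hasDerivAt_sin y).const_mul (-k)).deriv
        rw [hd]
        refine NNReal.coe_le_coe.mp ?_
        rw [coe_nnnorm]
        show ‖-k * Real.cos y‖ ≤ k
        simp only [NNReal.coe_mk, Real.norm_eq_abs, abs_mul, abs_neg, abs_of_pos hk]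
        nlinarith [abs_cos_le_one y, abs_nonneg (Real.cos y), hk.le]
    have := ODE_solution_unique (v := fun _ y => -k * Real.sin y) (f := θ) (g := g)
      (a := 0) (b := t) (fun _ => hlip)
      (fun s _ => (hθ s).continuousAt.continuousWithinAt)
      (fun s _ => (hθ s).hasDerivWithinAt)
      (fun s _ => (hg' s).continuousAt.continuousWithinAt)
      (fun s _ => (hg' s).hasDerivWithinAt)
      (by rw [h0, hg0])
    exact this ⟨ht, le_refl t⟩
  -- g tends to 0
  have htg : Tendsto g atTop (nhds 0) := by
    have h1 : Tendsto (fun t : ℝ => -k * t) atTop atBot :=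
      tendsto_id.const_mul_atTop_of_neg (neg_neg_iff_pos.mpr hk)
    have h2 : Tendsto (fun t : ℝ => c * Real.exp (-k * t)) atTop (nhds 0) := by
      have := Real.tendsto_exp_atBot.comp h1
      simpa using this.const_mul c
    have h3 := (Real.continuous_arctan.tendsto 0).comp h2
    simpa [hg, Real.arctan_zero] using h3.const_mul 2
  have hθ0 : Tendsto θ atTop (nhds 0) := by
    apply htg.congr' _
    filter_upwards [eventually_ge_atTop (0:ℝ)] with t ht
    exact (heq t ht).symm
  refine ⟨hθ0, ?_⟩
  have hcos := (Real.continuous_cos.tendsto 0).comp hθ0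
  have hsin := (Real.continuous_sin.tendsto 0).comp hθ0
  simp only [Function.comp, Real.cos_zero, Real.sin_zero] at hcos hsin
  exact hcos.prodMk_nhds hsin
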